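/- Let U be a subset of ℕ such that the natural density d(U) exists and is positive. Then U is fractionally dense in ℝ_{>0}, i.e. the quotient set R(U) = {u/u' : u, u' ∈ U} is dense in the positive reals. -/

import Mathlib

open Filter

/-- Key lemma: if `U` has positive density `γ`, then for every `δ > 0`,
for all sufficiently large `n` there is `u ∈ U` with `n < u ≤ (1+δ) n`. -/
lemma stmt_4_key (U : Set ℕ) (γ : ℝ) (hγ : 0 < γ)
    (hU : Filter.Tendsto (fun n : ℕ => ({u ∈ U | u ≤ n}.ncard : ℝ) / n)
      Filter.atTop (nhds γ)) (δ : ℝ) (hδ : 0 < δ) :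
    ∃ N : ℕ, ∀ n : ℕ, N ≤ n → ∃ u ∈ U, n < u ∧ (u : ℝ) ≤ (1 + δ) * n := by
  set A : ℕ → ℝ := fun n => ({u ∈ U | u ≤ n}.ncard : ℝ) with hA
  set ε : ℝ := γ * δ / (2 * (2 + δ)) with hε
  have hεpos : 0 < ε := by positivity
  have heq : ε * (2 + δ) = γ * δ / 2 := by
    rw [hε]; field_simp
  have hεγ : ε < γ := by
    rw [hε, div_lt_iff₀ (by linarith)]
    nlinarith
  obtain ⟨N₀, hN₀⟩ := (Metric.tendsto_atTop.mp hU) ε hεpos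
  refine ⟨max (N₀ + 1) (⌈2 / δ⌉₊ + 1), fun n hn => ?_⟩
  have hn₀ : N₀ + 1 ≤ n := le_trans (le_max_left _ _) hn
  have hn₁' : ⌈2 / δ⌉₊ + 1 ≤ n := le_trans (le_max_right _ _) hn
  have hn₁ : 2 / δ + 1 ≤ (n : ℝ) := by
    have h1 : 2 / δ ≤ (⌈2 / δ⌉₊ : ℝ) := Nat.le_ceil _
    have h2 : ((⌈2 / δ⌉₊ + 1 : ℕ) : ℝ) ≤ (n : ℝ) := Nat.cast_le.mpr hn₁'
    push_cast at h2
    linarith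
  have hnpos : 0 < n := by omega
  have hnR : (0 : ℝ) < n := Nat.cast_pos.mpr hnpos
  set m := ⌊(1 + δ) * n⌋₊ with hm
  have hnm : n ≤ m := Nat.le_floor (by nlinarith)
  have hmR : (1 + δ) * n < (m : ℝ) + 1 := Nat.lt_floor_add_one _
  have hmle : (m : ℝ) ≤ (1 + δ) * n := Nat.floor_le (by positivity)
  have hmRpos : (0 : ℝ) < m := lt_of_lt_of_le hnR (Nat.cast_le.mpr hnm)
  have h1 : |A n / n - γ| < ε := hN₀ n (by omega)
  have h2 : |A m / m - γ| < ε := hN₀ m (by omega)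
  have hAn : A n < (γ + ε) * n := by
    have := (abs_lt.mp h1).2
    have h' : A n / n < γ + ε := by linarith
    calc A n = A n / n * n := by field_simp
    _ < (γ + ε) * n := by exact mul_lt_mul_of_pos_right h' hnR
  have hAm : (γ - ε) * m < A m := by
    have := (abs_lt.mp h2).1
    have h' : γ - ε < A m / m := by linarith
    calc (γ - ε) * m < A m / m * m := mul_lt_mul_of_pos_right h' hmRpos
    _ = A m := by field_simp
  have hlt : A n < A m := by
    have hge : (γ - ε) * ((1 + δ) * n - 1) ≤ (γ - ε) * m := by
      apply mul_le_mul_of_nonneg_left _ (by linarith)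
      linarith
    -- A m - A n > (γ-ε)((1+δ)n - 1) - (γ+ε)n = (γδ/2) n - (γ-ε) > 0
    have hδn : γ * δ / 2 * n ≥ γ - ε + γ * δ / 2 := by
      have : δ * (n : ℝ) ≥ 2 + δ := by
        have := mul_le_mul_of_nonneg_left hn₁ (le_of_lt hδ)
        calc (2 : ℝ) + δ = δ * (2 / δ + 1) := by field_simp
        _ ≤ δ * n := this
      nlinarith
    nlinarith
  by_contra h
  push_neg at h
  have hset : {u ∈ U | u ≤ m} = {u ∈ U | u ≤ n} := by
    ext u
    simp only [Set.mem_setOf_eq]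
    constructor
    · rintro ⟨huU, hum⟩
      refine ⟨huU, ?_⟩
      by_contra hnu
      push_neg at hnu
      have := h u huU hnu
      have : (u : ℝ) ≤ (1 + δ) * n := le_trans (Nat.cast_le.mpr hum) hmle
      linarith [h u huU hnu]
    · rintro ⟨huU, hun⟩
      exact ⟨huU, le_trans hun hnm⟩
  have : A m = A n := by rw [hA]; simp only; rw [hset]
  linarith

/-- Corollary: if `U ⊆ ℕ` has positive natural density, then `U` is
fractionally dense in the positive reals. -/
theorem stmt_4 (U : Set ℕ) (γ : ℝ) (hγ : 0 < γ)
    (hU : Filter.Tendsto (fun n : ℕ => ({u ∈ U | u ≤ n}.ncard : ℝ) / n)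
      Filter.atTop (nhds γ)) :
    Set.Ioi (0 : ℝ) ⊆
      closure {x : ℝ | ∃ u ∈ U, ∃ v ∈ U, x = (u : ℝ) / (v : ℝ)} := by
  intro x hx
  rw [Set.mem_Ioi] at hx
  rw [Metric.mem_closure_iff]
  intro ε hε
  set δ : ℝ := min 1 (ε / (2 * x)) with hδdef
  have hδ : 0 < δ := lt_min one_pos (by positivity)
  have hδ1 : δ ≤ 1 := min_le_left _ _
  have hδx : δ * x ≤ ε / 2 := by
    have : δ ≤ ε / (2 * x) := min_le_right _ _
    calc δ * x ≤ ε / (2 * x) * x := mul_le_mul_of_nonneg_right this (le_of_lt hx)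
    _ = ε / 2 := by field_simp
  obtain ⟨N, hN⟩ := stmt_4_key U γ hγ hU δ hδ
  -- pick v ∈ U large
  set M : ℕ := max N (⌈max ((N : ℝ) / x) (5 / ε)⌉₊) with hM
  obtain ⟨v, hvU, hvM, -⟩ := hN M (le_max_left _ _)
  have hvN : (0 : ℕ) < v := lt_of_le_of_lt (Nat.zero_le M) hvM
  have hvR : (0 : ℝ) < v := Nat.cast_pos.mpr hvN
  have hvbig : max ((N : ℝ) / x) (5 / ε) ≤ (v : ℝ) := by
    calc max ((N : ℝ) / x) (5 / ε) ≤ (⌈max ((N : ℝ) / x) (5 / ε)⌉₊ : ℝ) := Nat.le_ceil _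
    _ ≤ (M : ℝ) := Nat.cast_le.mpr (le_max_right _ _)
    _ ≤ (v : ℝ) := Nat.cast_le.mpr (le_of_lt hvM)
  have hv4 : 5 / ε ≤ (v : ℝ) := le_trans (le_max_right _ _) hvbig
  have hvNx : (N : ℝ) ≤ x * v := by
    have h1 : (N : ℝ) / x ≤ (v : ℝ) := le_trans (le_max_left _ _) hvbig
    calc (N : ℝ) = (N : ℝ) / x * x := by field_simp
    _ ≤ (v : ℝ) * x := mul_le_mul_of_nonneg_right h1 (le_of_lt hx)
    _ = x * v := by ring
  set n : ℕ := ⌈x * v⌉₊ with hn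
  have hnN : N ≤ n := by
    rw [hn]
    have := Nat.ceil_mono hvNx (R := ℝ)
    rwa [Nat.ceil_natCast] at this
  obtain ⟨u, huU, hun, hub⟩ := hN n hnN
  refine ⟨(u : ℝ) / (v : ℝ), ⟨u, huU, v, hvU, rfl⟩, ?_⟩
  have hxvn : x * v ≤ (n : ℝ) := Nat.le_ceil _
  have hnxv : (n : ℝ) < x * v + 1 := by
    rw [hn]
    exact Nat.ceil_lt_add_one (by positivity)
  have hugt : x * v < (u : ℝ) := by
    have : (n : ℝ) < (u : ℝ) := Nat.cast_lt.mpr hun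
    linarith
  have huv_gt : x < (u : ℝ) / v := by
    rw [lt_div_iff₀ hvR]; linarith
  have hule : (u : ℝ) ≤ (1 + δ) * (x * v + 1) := by
    calc (u : ℝ) ≤ (1 + δ) * n := hub
    _ ≤ (1 + δ) * (x * v + 1) := by nlinarith
  have h2v : 2 < ε / 2 * v := by
    have h5 : 5 ≤ ε * v := by
      have := mul_le_mul_of_nonneg_left hv4 (le_of_lt hε)
      calc (5 : ℝ) = ε * (5 / ε) := by field_simp
      _ ≤ ε * v := this
    nlinarith
  have huv_lt : (u : ℝ) / v < x + ε := by
    rw [div_lt_iff₀ hvR]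
    have hδxv : δ * x * (v : ℝ) ≤ ε / 2 * v := by
      have := mul_le_mul_of_nonneg_right hδx (le_of_lt hvR)
      linarith
    have hexp : (1 + δ) * (x * (v : ℝ) + 1) = x * v + δ * x * v + (1 + δ) := by ring
    have h2 : (1 + δ : ℝ) ≤ 2 := by linarith
    nlinarith
  rw [Real.dist_eq, abs_sub_comm, abs_of_pos (by linarith)]
  linarith
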